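/- Let n ≥ 3 and let k be an algebraically closed field whose characteristic is either 0 or at least n. If x = (x_0, …, x_n) ∈ k^{n+1} is a nonzero solution of the Büchi system of length n, then at most two of the coordinates x_0, …, x_n are zero. -/
import Mathlib


open scoped Classical in
/-- Over an algebraically closed field whose characteristic is `0` or at least
`n`, any nonzero solution of the Büchi system of length `n ≥ 3` has at most
two vanishing coordinates among `x_0, …, x_n`. -/
theorem buchi_at_most_two_zero_coords {k : Type*} [Field k] [IsAlgClosed k]
    (n : ℕ) (hn : 3 ≤ n) (hchar : ringChar k = 0 ∨ n ≤ ringChar k)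
    (x : ℕ → k)
    (hsys : ∀ i : ℕ, 1 ≤ i → i ≤ n - 2 →
      x (i + 2) ^ 2 - 2 * x (i + 1) ^ 2 + x i ^ 2 - 2 * x 0 ^ 2 = 0)
    (hx : ∃ i ≤ n, x i ≠ 0) :
    ((Finset.range (n + 1)).filter (fun i => x i = 0)).card ≤ 2 := by
  set A := x 0 ^ 2 with hA
  set B := x 2 ^ 2 - x 1 ^ 2 - 3 * A with hB
  set C := 2 * x 1 ^ 2 - x 2 ^ 2 + 2 * A with hC
  -- the squares form a quadratic sequence
  have quad : ∀ i, 1 ≤ i → i ≤ n → x i ^ 2 = A * (i : k) ^ 2 + B * (i : k) + C := by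
    intro i
    induction i using Nat.strong_induction_on with
    | _ i ih =>
      intro h1 h2
      match i, h1 with
      | 1, _ => push_cast; ring
      | 2, _ => push_cast; ring
      | (m + 3), _ =>
        have hs := hsys (m + 1) (by omega) (by omega)
        have e1 := ih (m + 1) (by omega) (by omega) (by omega)
        have e2 := ih (m + 2) (by omega) (by omega) (by omega)
        have hs' : x (m + 3) ^ 2 - 2 * x (m + 2) ^ 2 + x (m + 1) ^ 2 - 2 * A = 0 := hs
        have key : x (m + 3) ^ 2 = 2 * x (m + 2) ^ 2 - x (m + 1) ^ 2 + 2 * A := by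
          linear_combination hs'
        rw [key, e1, e2]
        push_cast
        ring
  -- injectivity of the natural cast on [1, n]
  have injcast : ∀ i j : ℕ, 1 ≤ i → i ≤ n → 1 ≤ j → j ≤ n → (i : k) = (j : k) → i = j := by
    have base : ∀ i j : ℕ, 1 ≤ i → j ≤ n → i ≤ j → (i : k) = (j : k) → i = j := by
      intro i j h1 hjn hij h
      have h0 : ((j - i : ℕ) : k) = 0 := by
        rw [Nat.cast_sub hij, h, sub_self]
      haveI := ringChar.charP k
      have hd : ringChar k ∣ (j - i) := (CharP.cast_eq_zero_iff k (ringChar k) _).mp h0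
      rcases hchar with h0' | h0'
      · rw [h0'] at hd
        have := Nat.eq_zero_of_zero_dvd hd
        omega
      · rcases Nat.eq_zero_or_pos (j - i) with he | he
        · omega
        · have := Nat.le_of_dvd he hd
          omega
    intro i j hi hin hj hjn h
    rcases le_total i j with hle | hle
    · exact base i j hi hjn hle h
    · exact (base j i hj hin hle h.symm).symm
  have necast : ∀ i j : ℕ, 1 ≤ i → i ≤ n → 1 ≤ j → j ≤ n → i ≠ j → (i : k) ≠ (j : k) :=
    fun i j hi hin hj hjn hne h => hne (injcast i j hi hin hj hjn h)
  by_contra hcon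
  push_neg at hcon
  rw [Finset.two_lt_card] at hcon
  obtain ⟨a, ha, b, hb, c, hc, hab, hac, hbc⟩ := hcon
  simp only [Finset.mem_filter, Finset.mem_range] at ha hb hc
  by_cases h0 : x 0 = 0
  · -- degenerate case: A = 0, the sequence of squares is linear
    have hA0 : A = 0 := by rw [hA, h0]; ring
    have lin : ∀ i, 1 ≤ i → i ≤ n → x i = 0 → B * (i : k) + C = 0 := by
      intro i h1 h2 hz
      have hq := quad i h1 h2
      rw [hz, hA0] at hq
      linear_combination -hq
    obtain ⟨i, j, hi1, hin, hiz, hj1, hjn, hjz, hij⟩ :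
        ∃ i j, 1 ≤ i ∧ i ≤ n ∧ x i = 0 ∧ 1 ≤ j ∧ j ≤ n ∧ x j = 0 ∧ i ≠ j := by
      by_cases ha0 : a = 0
      · exact ⟨b, c, by omega, by omega, hb.2, by omega, by omega, hc.2, by omega⟩
      · by_cases hb0 : b = 0
        · exact ⟨a, c, by omega, by omega, ha.2, by omega, by omega, hc.2, by omega⟩
        · exact ⟨a, b, by omega, by omega, ha.2, by omega, by omega, hb.2, by omega⟩
    have e1 := lin i hi1 hin hiz
    have e2 := lin j hj1 hjn hjz
    have hne : (i : k) ≠ (j : k) := necast i j hi1 hin hj1 hjn hij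
    have hB0 : B = 0 := by
      have hprod : B * ((i : k) - (j : k)) = 0 := by linear_combination e1 - e2
      rcases mul_eq_zero.mp hprod with h | h
      · exact h
      · exact absurd (sub_eq_zero.mp h) hne
    have hC0 : C = 0 := by
      rw [hB0] at e1
      linear_combination e1
    have hall : ∀ m ≤ n, x m = 0 := by
      intro m hmn
      rcases Nat.eq_zero_or_pos m with h | h
      · rw [h]; exact h0
      · have hq := quad m h hmn
        rw [hA0, hB0, hC0] at hq
        have : x m ^ 2 = 0 := by rw [hq]; ring
        exact pow_eq_zero_iff (two_ne_zero) |>.mp this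
    obtain ⟨m, hm, hmne⟩ := hx
    exact hmne (hall m hm)
  · -- nondegenerate case: A ≠ 0, a genuine quadratic has at most two roots
    have hA0 : A ≠ 0 := pow_ne_zero 2 h0
    have ha1 : 1 ≤ a := Nat.pos_of_ne_zero (fun h => h0 (h ▸ ha.2))
    have hb1 : 1 ≤ b := Nat.pos_of_ne_zero (fun h => h0 (h ▸ hb.2))
    have hc1 : 1 ≤ c := Nat.pos_of_ne_zero (fun h => h0 (h ▸ hc.2))
    have qz : ∀ i, 1 ≤ i → i ≤ n → x i = 0 → A * (i : k) ^ 2 + B * (i : k) + C = 0 := by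
      intro i h1 h2 hz
      have hq := quad i h1 h2
      rw [hz] at hq
      linear_combination -hq
    have slope : ∀ i j, 1 ≤ i → i ≤ n → 1 ≤ j → j ≤ n → x i = 0 → x j = 0 → i ≠ j →
        A * ((i : k) + (j : k)) + B = 0 := by
      intro i j hi1 hin hj1 hjn hiz hjz hij
      have e1 := qz i hi1 hin hiz
      have e2 := qz j hj1 hjn hjz
      have hne : (i : k) ≠ (j : k) := necast i j hi1 hin hj1 hjn hij
      have hprod : (A * ((i : k) + (j : k)) + B) * ((i : k) - (j : k)) = 0 := by
        linear_combination e1 - e2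
      rcases mul_eq_zero.mp hprod with h | h
      · exact h
      · exact absurd (sub_eq_zero.mp h) hne
    have s1 := slope a b ha1 (by omega) hb1 (by omega) ha.2 hb.2 hab
    have s2 := slope a c ha1 (by omega) hc1 (by omega) ha.2 hc.2 hac
    have hprod : A * ((b : k) - (c : k)) = 0 := by linear_combination s1 - s2
    rcases mul_eq_zero.mp hprod with h | h
    · exact hA0 h
    · exact necast b c hb1 (by omega) hc1 (by omega) hbc (sub_eq_zero.mp h)
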